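/- Let p be a prime, j ≥ 1 an integer, and t a positive integer not divisible by p. If lim_{N→∞} (1/N) ∑_{t|n, n≤N} φ(n)/n = L, then lim_{N→∞} (1/N) ∑_{p^j t | n, n≤N} φ(n)/n = L/(p^{j−1}(p+1)). -/

import Mathlib

open Filter Topology

noncomputable def Fsum (t N : ℕ) : ℝ :=
  ∑ n ∈ (Finset.Icc 1 N).filter (fun n => t ∣ n), (Nat.totient n : ℝ) / n

lemma Fsum_reindex (f : ℕ → ℝ) (p t N : ℕ) (hp : 0 < p) :
    ∑ n ∈ (Finset.Icc 1 N).filter (fun n => p * t ∣ n), f n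
      = ∑ m ∈ (Finset.Icc 1 (N / p)).filter (fun m => t ∣ m), f (p * m) := by
  refine Finset.sum_nbij' (fun n => n / p) (fun m => p * m) ?_ ?_ ?_ ?_ ?_
  · intro n hn
    simp only [Finset.mem_filter, Finset.mem_Icc] at hn ⊢
    obtain ⟨⟨h1, h2⟩, ⟨c, rfl⟩⟩ := hn
    have htc : 1 ≤ t * c := by
      rcases Nat.eq_zero_or_pos (t * c) with h | h
      · exfalso
        have : p * t * c = 0 := by rw [Nat.mul_assoc, h, Nat.mul_zero]
        omega
      · exact h
    refine ⟨⟨?_, Nat.div_le_div_right h2⟩, ?_⟩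
    · rw [Nat.mul_assoc, Nat.mul_div_cancel_left _ hp]; exact htc
    · rw [Nat.mul_assoc, Nat.mul_div_cancel_left _ hp]; exact ⟨c, rfl⟩
  · intro m hm
    simp only [Finset.mem_filter, Finset.mem_Icc] at hm ⊢
    obtain ⟨⟨h1, h2⟩, ⟨c, rfl⟩⟩ := hm
    refine ⟨⟨Nat.one_le_iff_ne_zero.2 (by positivity), ?_⟩, ⟨c, by ring⟩⟩
    calc p * (t * c) ≤ p * (N / p) := Nat.mul_le_mul_left p h2
      _ ≤ N := Nat.mul_div_le N p
  · intro n hn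
    simp only [Finset.mem_filter, Finset.mem_Icc] at hn
    obtain ⟨_, ⟨c, rfl⟩⟩ := hn
    simp [Nat.mul_assoc, Nat.mul_div_cancel_left _ hp]
  · intro m hm
    simp [Nat.mul_div_cancel_left _ hp]
  · intro n hn
    simp only [Finset.mem_filter, Finset.mem_Icc] at hn
    obtain ⟨_, ⟨c, rfl⟩⟩ := hn
    simp [Nat.mul_assoc, Nat.mul_div_cancel_left _ hp]

lemma term_eq (p m : ℕ) (hp : p.Prime) (hm : 0 < m) :
    (Nat.totient (p * m) : ℝ) / (p * m)
      = (((p : ℝ) - 1) / p) * ((Nat.totient m : ℝ) / m)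
        + (1 / p) * (if p ∣ m then (Nat.totient m : ℝ) / m else 0) := by
  have hp0 : (p : ℝ) ≠ 0 := Nat.cast_ne_zero.2 hp.pos.ne'
  have hm0 : (m : ℝ) ≠ 0 := Nat.cast_ne_zero.2 hm.ne'
  by_cases h : p ∣ m
  · rw [if_pos h, Nat.totient_mul_of_prime_of_dvd hp h]
    push_cast
    field_simp
    ring
  · rw [if_neg h, Nat.totient_mul (hp.coprime_iff_not_dvd.2 h), Nat.totient_prime hp]
    have h1 : ((p - 1 : ℕ) : ℝ) = (p : ℝ) - 1 := by
      have := hp.one_lt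
      push_cast [Nat.cast_sub (by omega : 1 ≤ p)]
      ring
    push_cast [h1]
    field_simp
    ring

lemma Fsum_identity1 (p t N : ℕ) (hp : p.Prime) (hpt : ¬ p ∣ t) :
    Fsum (p * t) N
      = (((p : ℝ) - 1) / p) * Fsum t (N / p) + (1 / p) * Fsum (p * t) (N / p) := by
  unfold Fsum
  rw [Fsum_reindex _ p t N hp.pos]
  have hstep : ∀ m ∈ (Finset.Icc 1 (N / p)).filter (fun m => t ∣ m),
      (Nat.totient (p * m) : ℝ) / (p * m)
        = (((p : ℝ) - 1) / p) * ((Nat.totient m : ℝ) / m)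
          + (1 / p) * (if p ∣ m then (Nat.totient m : ℝ) / m else 0) := by
    intro m hm
    simp only [Finset.mem_filter, Finset.mem_Icc] at hm
    exact term_eq p m hp (by omega)
  simp only [Nat.cast_mul]
  rw [Finset.sum_congr rfl hstep, Finset.sum_add_distrib, ← Finset.mul_sum,
    ← Finset.mul_sum, ← Finset.sum_filter, Finset.filter_filter]
  have hset : ((Finset.Icc 1 (N / p)).filter fun m => t ∣ m ∧ p ∣ m)
      = (Finset.Icc 1 (N / p)).filter (fun m => p * t ∣ m) := by
    refine Finset.filter_congr ?_
    intro m _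
    constructor
    · rintro ⟨h1, h2⟩
      exact Nat.Coprime.mul_dvd_of_dvd_of_dvd (hp.coprime_iff_not_dvd.2 hpt) h2 h1
    · intro h
      exact ⟨(dvd_mul_left t p).trans h, (dvd_mul_right p t).trans h⟩
  rw [hset]

lemma Fsum_identity2 (p d N : ℕ) (hp : p.Prime) (hpd : p ∣ d) :
    Fsum (p * d) N = Fsum d (N / p) := by
  unfold Fsum
  rw [Fsum_reindex _ p d N hp.pos]
  refine Finset.sum_congr rfl ?_
  intro m hm
  simp only [Finset.mem_filter, Finset.mem_Icc] at hm
  obtain ⟨⟨h1, _⟩, hd⟩ := hm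
  rw [Nat.totient_mul_of_prime_of_dvd hp (hpd.trans hd)]
  push_cast [Nat.cast_mul]
  have : (m:ℝ) ≠ 0 := Nat.cast_ne_zero.2 (by omega)
  have : (p:ℝ) ≠ 0 := Nat.cast_ne_zero.2 hp.pos.ne'
  field_simp

lemma Fsum_nonneg (t N : ℕ) : 0 ≤ Fsum t N := by
  unfold Fsum
  refine Finset.sum_nonneg fun n _ => by positivity

lemma Fsum_le (t N : ℕ) : Fsum t N ≤ N := by
  unfold Fsum
  calc ∑ n ∈ (Finset.Icc 1 N).filter (fun n => t ∣ n), (Nat.totient n : ℝ) / n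
      ≤ ∑ n ∈ (Finset.Icc 1 N).filter (fun n => t ∣ n), 1 := by
        refine Finset.sum_le_sum fun n hn => ?_
        simp only [Finset.mem_filter, Finset.mem_Icc] at hn
        have h1 : (1:ℕ) ≤ n := hn.1.1
        have : (n:ℝ) ≠ 0 := Nat.cast_ne_zero.2 (by omega)
        rw [div_le_one (by positivity)]
        exact_mod_cast Nat.totient_le n
    _ = ((Finset.Icc 1 N).filter (fun n => t ∣ n)).card := by simp
    _ ≤ (Finset.Icc 1 N).card := by exact_mod_cast Finset.card_filter_le _ _
    _ ≤ N := by simp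

lemma nat_div_tendsto_atTop (p : ℕ) (hp : 0 < p) :
    Tendsto (fun N : ℕ => N / p) atTop atTop := by
  refine tendsto_atTop_atTop.2 fun b => ⟨p * b, fun n hn => ?_⟩
  rw [Nat.le_div_iff_mul_le hp, Nat.mul_comm]
  omega

lemma nat_div_cast_tendsto (p : ℕ) (hp : 0 < p) :
    Tendsto (fun N : ℕ => ((N / p : ℕ) : ℝ) / N) atTop (𝓝 (1 / p)) := by
  have hp0 : (p:ℝ) ≠ 0 := Nat.cast_ne_zero.2 hp.ne'
  rw [← tendsto_sub_nhds_zero_iff]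
  refine squeeze_zero_norm' ?_ tendsto_one_div_atTop_nhds_zero_nat
  filter_upwards [eventually_ge_atTop 1] with N hN
  have hN0 : (N:ℝ) ≠ 0 := Nat.cast_ne_zero.2 (by omega)
  have hmod : N = p * (N / p) + N % p := (Nat.div_add_mod N p).symm
  have hmodlt : N % p < p := Nat.mod_lt _ hp
  have hle : N % p ≤ N := Nat.mod_le N p
  have hsub : p * (N / p) = N - N % p := by omega
  have hcast : ((N / p : ℕ) : ℝ) * p = (N:ℝ) - ((N % p : ℕ) : ℝ) := by
    have h := congrArg (fun k : ℕ => (k : ℝ)) hsub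
    push_cast [Nat.cast_sub hle] at h
    linarith
  have h1 : ((N / p : ℕ) : ℝ) / N - 1 / p = -(((N % p : ℕ):ℝ) / (p * N)) := by
    field_simp
    linear_combination hcast
  rw [Real.norm_eq_abs, h1, abs_neg, abs_of_nonneg (by positivity)]
  rw [div_le_div_iff₀ (by positivity) (by positivity)]
  have h2 : ((N % p : ℕ):ℝ) ≤ p := by exact_mod_cast hmodlt.le
  have h3 : (0:ℝ) < N := by exact_mod_cast (show 0 < N by omega)
  nlinarith

lemma scaled_tendsto (d p : ℕ) (hp : 0 < p) (A : ℝ)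
    (hA : Tendsto (fun N : ℕ => Fsum d N / N) atTop (𝓝 A)) :
    Tendsto (fun N : ℕ => Fsum d (N / p) / N) atTop (𝓝 (A / p)) := by
  have h1 : Tendsto (fun N : ℕ => Fsum d (N / p) / ((N / p : ℕ) : ℝ)) atTop (𝓝 A) :=
    hA.comp (nat_div_tendsto_atTop p hp)
  have h2 := h1.mul (nat_div_cast_tendsto p hp)
  have : A * (1 / p) = A / p := by ring
  rw [this] at h2
  refine h2.congr' ?_
  filter_upwards [eventually_ge_atTop p] with N hN
  have hNp : 1 ≤ N / p := by
    rw [Nat.le_div_iff_mul_le hp]; omega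
  have h3 : ((N / p : ℕ) : ℝ) ≠ 0 := Nat.cast_ne_zero.2 (by omega)
  have h4 : (N:ℝ) ≠ 0 := Nat.cast_ne_zero.2 (by have := hp; omega)
  field_simp

lemma abstract_fixed_point (u e : ℕ → ℝ) (p : ℕ) (hp2 : 2 ≤ p) (A B : ℝ) (hB0 : 0 ≤ B)
    (hB : ∀ N, |u N - A| ≤ B)
    (hrec : ∀ N, 1 ≤ N → |u N - A| ≤ |e N| + (1 / ((p:ℝ) * p)) * |u (N / p) - A|)
    (heT : Tendsto e atTop (𝓝 0)) :
    Tendsto u atTop (𝓝 A) := by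
  have hp0 : (0:ℝ) < p := by positivity
  have hp2' : (2:ℝ) ≤ p := by exact_mod_cast hp2
  set q : ℝ := 1 / ((p:ℝ) * p) with hqdef
  have hq0 : 0 < q := by positivity
  have hq1 : q < 1 := by
    rw [hqdef, div_lt_one (by positivity)]
    nlinarith
  have h1q : 0 < 1 - q := by linarith
  have hind : ∀ ε' : ℝ, 0 < ε' → ∀ N₁ : ℕ, 1 ≤ N₁ → (∀ N, N₁ ≤ N → |e N| ≤ ε') →
      ∀ k : ℕ, ∀ N : ℕ, N₁ * p ^ k ≤ N → |u N - A| ≤ ε' / (1 - q) + q ^ k * B := by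
    intro ε' hε' N₁ hN₁ hee k
    induction k with
    | zero =>
      intro N _
      have h1 : (0:ℝ) ≤ ε' / (1 - q) := by positivity
      simp only [pow_zero, one_mul]
      linarith [hB N]
    | succ k ih =>
      intro N hNk
      have hppos : 0 < p := by omega
      have hNN₁ : N₁ ≤ N :=
        le_trans (Nat.le_mul_of_pos_right _ (Nat.pow_pos hppos)) hNk
      have hN1 : 1 ≤ N := le_trans hN₁ hNN₁
      have hM : N₁ * p ^ k ≤ N / p := by
        have h1 : N₁ * p ^ (k + 1) / p ≤ N / p := Nat.div_le_div_right hNk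
        have h2 : N₁ * p ^ (k + 1) / p = N₁ * p ^ k := by
          rw [pow_succ, ← Nat.mul_assoc, Nat.mul_div_cancel _ hppos]
        omega
      have hih := ih (N / p) hM
      have hkey : ε' + q * (ε' / (1 - q) + q ^ k * B) = ε' / (1 - q) + q ^ (k + 1) * B := by
        field_simp
        ring
      calc |u N - A| ≤ |e N| + q * |u (N / p) - A| := hrec N hN1
        _ ≤ ε' + q * (ε' / (1 - q) + q ^ k * B) := by
            have h3 := hee N hNN₁
            gcongr
        _ = ε' / (1 - q) + q ^ (k + 1) * B := hkey
  rw [Metric.tendsto_atTop]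
  intro ε hε
  have hε'0 : 0 < ε * (1 - q) / 3 := by positivity
  obtain ⟨N₁', hN₁'⟩ := Metric.tendsto_atTop.1 heT (ε * (1 - q) / 3) hε'0
  have hee : ∀ N, max N₁' 1 ≤ N → |e N| ≤ ε * (1 - q) / 3 := by
    intro N hN
    have h := hN₁' N (le_trans (le_max_left _ _) hN)
    rw [Real.dist_eq, sub_zero] at h
    linarith
  obtain ⟨k, hk⟩ : ∃ k : ℕ, q ^ k * B < ε / 3 := by
    have h0 : Tendsto (fun k : ℕ => q ^ k * B) atTop (𝓝 (0 * B)) :=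
      (tendsto_pow_atTop_nhds_zero_of_lt_one hq0.le hq1).mul_const B
    rw [zero_mul] at h0
    exact (h0.eventually (eventually_lt_nhds (by positivity : (0:ℝ) < ε / 3))).exists
  refine ⟨max N₁' 1 * p ^ k, fun N hN => ?_⟩
  have hfin := hind (ε * (1 - q) / 3) hε'0 (max N₁' 1) (le_max_right _ _) hee k N hN
  rw [Real.dist_eq]
  have hεq : ε * (1 - q) / 3 / (1 - q) = ε / 3 := by field_simp
  rw [hεq] at hfin
  linarith

lemma key_lemma (p t : ℕ) (hp : p.Prime) (hpt : ¬ p ∣ t) (L : ℝ)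
    (hL : Tendsto (fun N : ℕ => Fsum t N / N) atTop (𝓝 L)) :
    Tendsto (fun N : ℕ => Fsum (p * t) N / N) atTop (𝓝 (L / ((p:ℝ) + 1))) := by
  have hp2 : 2 ≤ p := hp.two_le
  have hp0 : (0:ℝ) < p := by exact_mod_cast hp.pos
  have hp0' : (p:ℝ) ≠ 0 := hp0.ne'
  have hp1 : (p:ℝ) + 1 ≠ 0 := by positivity
  refine abstract_fixed_point _
    (fun N => (((p:ℝ) - 1) / p) * (Fsum t (N / p) / N - L / p)
      + ((L / ((p:ℝ) + 1)) / p) * (((N / p : ℕ) : ℝ) / N - 1 / p))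
    p hp2 _ (1 + |L / ((p:ℝ) + 1)|) (by positivity) ?_ ?_ ?_
  · -- boundedness
    intro N
    have hu0 : 0 ≤ Fsum (p * t) N / N :=
      div_nonneg (Fsum_nonneg _ _) (Nat.cast_nonneg N)
    have hu1 : Fsum (p * t) N / N ≤ 1 := by
      rcases Nat.eq_zero_or_pos N with h | h
      · subst h; simp [Fsum]
      · rw [div_le_one (by exact_mod_cast h)]
        exact Fsum_le _ _
    have h1 : |Fsum (p * t) N / N - L / ((p:ℝ) + 1)|
        ≤ |Fsum (p * t) N / N| + |L / ((p:ℝ) + 1)| := abs_sub _ _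
    have h2 : |Fsum (p * t) N / N| ≤ 1 := abs_le.2 ⟨by linarith, hu1⟩
    linarith
  · -- recurrence
    intro N hN
    have hN0 : (N:ℝ) ≠ 0 := Nat.cast_ne_zero.2 (by omega)
    have hNpos : (0:ℝ) < N := by positivity
    have hid : Fsum (p * t) N / N - L / ((p:ℝ) + 1)
        = ((((p:ℝ) - 1) / p) * (Fsum t (N / p) / N - L / p)
            + ((L / ((p:ℝ) + 1)) / p) * (((N / p : ℕ) : ℝ) / N - 1 / p))
          + (((N / p : ℕ) : ℝ) / ((p:ℝ) * N))
            * (Fsum (p * t) (N / p) / ((N / p : ℕ) : ℝ) - L / ((p:ℝ) + 1)) := by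
      rw [Fsum_identity1 p t N hp hpt]
      rcases Nat.eq_zero_or_pos (N / p) with hM | hM
      · rw [hM]
        simp only [Fsum, Finset.Icc_self, Nat.cast_zero]
        rw [show Finset.Icc 1 0 = (∅ : Finset ℕ) by simp]
        simp only [Finset.filter_empty, Finset.sum_empty]
        field_simp
        ring
      · have hM0 : ((N / p : ℕ):ℝ) ≠ 0 := Nat.cast_ne_zero.2 hM.ne'
        field_simp
        ring
    rw [hid]
    refine (abs_add_le _ _).trans ?_
    gcongr
    rw [abs_mul]
    have hc1 : |(((N / p : ℕ) : ℝ) / ((p:ℝ) * N))| ≤ 1 / ((p:ℝ) * p) := by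
      rw [abs_of_nonneg (by positivity)]
      have hNge : ((N / p : ℕ) : ℝ) ≤ (N:ℝ) / p := Nat.cast_div_le
      rw [div_le_div_iff₀ (by positivity) (by positivity)]
      calc ((N / p : ℕ) : ℝ) * ((p:ℝ) * p) ≤ ((N:ℝ)/p) * ((p:ℝ) * p) := by gcongr
        _ = 1 * ((p:ℝ) * N) := by field_simp
    exact mul_le_mul_of_nonneg_right hc1 (abs_nonneg _)
  · -- error tends to zero
    have h1 : Tendsto (fun N : ℕ => Fsum t (N / p) / N - L / p) atTop (𝓝 0) := by
      have h := (scaled_tendsto t p hp.pos L hL).sub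
        (tendsto_const_nhds (x := L / (p:ℝ)) (f := (atTop : Filter ℕ)))
      simpa using h
    have h2 : Tendsto (fun N : ℕ => ((N / p : ℕ) : ℝ) / N - 1 / p) atTop (𝓝 0) := by
      have h := (nat_div_cast_tendsto p hp.pos).sub
        (tendsto_const_nhds (x := (1:ℝ) / p) (f := (atTop : Filter ℕ)))
      simpa using h
    have h3 := (h1.const_mul (((p:ℝ) - 1) / p)).add (h2.const_mul ((L / ((p:ℝ) + 1)) / p))
    simpa using h3

lemma gen_lemma (p t : ℕ) (hp : p.Prime) (hpt : ¬ p ∣ t) (L : ℝ)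
    (hL : Tendsto (fun N : ℕ => Fsum t N / N) atTop (𝓝 L)) :
    ∀ k : ℕ, Tendsto (fun N : ℕ => Fsum (p ^ (k + 1) * t) N / N) atTop
      (𝓝 (L / ((p:ℝ) ^ k * ((p:ℝ) + 1)))) := by
  intro k
  induction k with
  | zero =>
    have h := key_lemma p t hp hpt L hL
    simpa [pow_one] using h
  | succ k ih =>
    have hId : (fun N : ℕ => Fsum (p ^ (k + 2) * t) N / N)
        = fun N : ℕ => Fsum (p ^ (k + 1) * t) (N / p) / N := by
      funext N
      have h1 : p ^ (k + 2) * t = p * (p ^ (k + 1) * t) := by ring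
      rw [h1, Fsum_identity2 p _ N hp
        (dvd_mul_of_dvd_left (dvd_pow_self p (Nat.succ_ne_zero k)) t)]
    have h2 := scaled_tendsto (p ^ (k + 1) * t) p hp.pos _ ih
    rw [hId]
    have h3 : L / ((p:ℝ) ^ k * ((p:ℝ) + 1)) / (p:ℝ)
        = L / ((p:ℝ) ^ (k + 1) * ((p:ℝ) + 1)) := by
      have hp0 : (p:ℝ) ≠ 0 := by exact_mod_cast hp.pos.ne'
      have hp1 : (p:ℝ) + 1 ≠ 0 := by positivity
      rw [div_div, pow_succ]
      ring_nf
    rw [h3] at h2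
    exact h2

theorem stmt12 (p t j : ℕ) (hp : p.Prime) (ht : 0 < t) (hpt : ¬ p ∣ t) (hj : 1 ≤ j) (L : ℝ)
    (hL : Tendsto (fun N : ℕ =>
      (∑ n ∈ (Finset.Icc 1 N).filter (fun n => t ∣ n), (Nat.totient n : ℝ) / n) / N)
      atTop (𝓝 L)) :
    Tendsto (fun N : ℕ =>
      (∑ n ∈ (Finset.Icc 1 N).filter (fun n => p ^ j * t ∣ n), (Nat.totient n : ℝ) / n) / N)
      atTop (𝓝 (L / (p ^ (j - 1) * (p + 1)))) := by
  obtain ⟨k, rfl⟩ : ∃ k, j = k + 1 := ⟨j - 1, by omega⟩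
  have h := gen_lemma p t hp hpt L hL k
  simpa [Fsum, Nat.add_sub_cancel] using h
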